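/- A frame {f_j} of a separable Hilbert space H indexed by ℕ can be written as a linear combination f_j = λ u_j + μ v_j of two orthonormal bases {u_j}, {v_j} of H (with fixed scalars λ, μ) if and only if {f_j} is a Riesz basis of H. -/

import Mathlib

open scoped InnerProductSpace

noncomputable section StmtAux

open ContinuousLinearMap in
/-- The image of a Hilbert basis under a linear isometric equivalence. -/
def stmt16HilbertBasisMap {H : Type*} [NormedAddCommGroup H] [InnerProductSpace ℂ H]
    [CompleteSpace H] (b : HilbertBasis ℕ ℂ H) (W : H ≃ₗᵢ[ℂ] H) : HilbertBasis ℕ ℂ H :=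
  HilbertBasis.ofRepr (W.symm.trans b.repr)

lemma stmt16HilbertBasisMap_apply {H : Type*} [NormedAddCommGroup H] [InnerProductSpace ℂ H]
    [CompleteSpace H] (b : HilbertBasis ℕ ℂ H) (W : H ≃ₗᵢ[ℂ] H) (j : ℕ) :
    stmt16HilbertBasisMap b W j = W (b j) := by
  classical
  rw [← HilbertBasis.repr_symm_single, ← HilbertBasis.repr_symm_single]
  rfl

/-- Parseval identity for a Hilbert basis. -/
lemma stmt16_parseval {H : Type*} [NormedAddCommGroup H] [InnerProductSpace ℂ H]
    [CompleteSpace H] (b : HilbertBasis ℕ ℂ H) (x : H) :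
    ∑' j, ‖⟪b j, x⟫_ℂ‖ ^ 2 = ‖x‖ ^ 2 := by
  have h := lp.norm_rpow_eq_tsum (p := 2) (E := fun _ : ℕ => ℂ) (by norm_num) (b.repr x)
  simp only [ENNReal.toReal_ofNat] at h
  rw [b.repr.norm_map x] at h
  rw [Real.rpow_two] at h
  have h2 : ∀ j, ‖(b.repr x) j‖ ^ (2 : ℝ) = ‖⟪b j, x⟫_ℂ‖ ^ 2 := by
    intro j
    rw [Real.rpow_two, b.repr_apply_apply]
  rw [tsum_congr h2] at h
  exact h.symm

/-- A continuous linear map which is bounded below together with its adjoint is a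
continuous linear equivalence. -/
lemma stmt16_equiv_of_bounded_below {H : Type*} [NormedAddCommGroup H]
    [InnerProductSpace ℂ H] [CompleteSpace H] (N : H →L[ℂ] H) (c : ℝ) (hc : 0 < c)
    (h1 : ∀ x, c * ‖x‖ ≤ ‖N x‖)
    (h2 : ∀ x, c * ‖x‖ ≤ ‖ContinuousLinearMap.adjoint N x‖) :
    ∃ T : H ≃L[ℂ] H, ∀ x, T x = N x := by
  have hanti : AntilipschitzWith (c⁻¹).toNNReal N := by
    refine ContinuousLinearMap.antilipschitz_of_bound N fun x => ?_
    rw [Real.coe_toNNReal _ (le_of_lt (inv_pos.mpr hc))]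
    rw [← inv_mul_le_iff₀ (inv_pos.mpr hc), inv_inv]
    exact h1 x
  have hker : LinearMap.ker (N : H →ₗ[ℂ] H) = ⊥ := by
    rw [LinearMap.ker_eq_bot]; exact hanti.injective
  have hclosed : IsClosed (LinearMap.range (N : H →ₗ[ℂ] H) : Set H) := by
    rw [LinearMap.coe_range]; exact hanti.isClosed_range N.uniformContinuous
  haveI : CompleteSpace (LinearMap.range (N : H →ₗ[ℂ] H)) := hclosed.completeSpace_coe
  have hrange : LinearMap.range (N : H →ₗ[ℂ] H) = ⊤ := by
    rw [← Submodule.orthogonal_eq_bot_iff]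
    rw [Submodule.eq_bot_iff]
    intro w hw
    have hNw : ContinuousLinearMap.adjoint N w = 0 := by
      have h0 : ⟪N (ContinuousLinearMap.adjoint N w), w⟫_ℂ = 0 :=
        hw _ ⟨ContinuousLinearMap.adjoint N w, rfl⟩
      rw [← ContinuousLinearMap.adjoint_inner_right] at h0
      exact inner_self_eq_zero.mp h0
    have := h2 w
    rw [hNw, norm_zero] at this
    have : ‖w‖ ≤ 0 := by nlinarith [norm_nonneg w]
    rw [← norm_eq_zero]
    linarith [norm_nonneg w]
  exact ⟨ContinuousLinearEquiv.ofBijective N hker hrange, fun x => rfl⟩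


/-- Adjoint of `lam • 1 + mu • U` for a unitary `U`. -/
lemma stmt16_adjoint_comb {H : Type*} [NormedAddCommGroup H] [InnerProductSpace ℂ H]
    [CompleteSpace H] (U : H ≃ₗᵢ[ℂ] H) (lam mu : ℂ) :
    ContinuousLinearMap.adjoint
        (lam • (1 : H →L[ℂ] H) + mu • U.toLinearIsometry.toContinuousLinearMap) =
      (starRingEnd ℂ) lam • (1 : H →L[ℂ] H) +
        (starRingEnd ℂ) mu • U.symm.toLinearIsometry.toContinuousLinearMap := by
  refine ((ContinuousLinearMap.eq_adjoint_iff _ _).mpr fun x y => ?_).symm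
  simp only [ContinuousLinearMap.add_apply, ContinuousLinearMap.smul_apply,
    ContinuousLinearMap.one_apply, LinearIsometry.coe_toContinuousLinearMap,
    LinearIsometryEquiv.coe_toLinearIsometry, inner_add_left, inner_add_right,
    inner_smul_left, inner_smul_right, starRingEnd_self_apply]
  rw [show ⟪U.symm x, y⟫_ℂ = ⟪x, U y⟫_ℂ by
    rw [← U.inner_map_map (U.symm x) y, U.apply_symm_apply]]

/-- `lam • 1 + mu • U` is normal for unitary `U` : it and its adjoint have the same norms. -/
lemma stmt16_norm_comb {H : Type*} [NormedAddCommGroup H] [InnerProductSpace ℂ H]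
    [CompleteSpace H] (U : H ≃ₗᵢ[ℂ] H) (lam mu : ℂ) (x : H) :
    ‖lam • x + mu • U x‖ = ‖(starRingEnd ℂ) lam • x + (starRingEnd ℂ) mu • U.symm x‖ := by
  have hsq : ‖lam • x + mu • U x‖ ^ 2
      = ‖(starRingEnd ℂ) lam • x + (starRingEnd ℂ) mu • U.symm x‖ ^ 2 := by
    rw [norm_add_sq (𝕜 := ℂ), norm_add_sq (𝕜 := ℂ)]
    have h1 : ⟪lam • x, mu • U x⟫_ℂ = (starRingEnd ℂ) lam * mu * ⟪x, U x⟫_ℂ := by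
      rw [inner_smul_left, inner_smul_right]; ring
    have h2 : ⟪(starRingEnd ℂ) lam • x, (starRingEnd ℂ) mu • U.symm x⟫_ℂ
        = (starRingEnd ℂ) ((starRingEnd ℂ) lam * mu * ⟪x, U x⟫_ℂ) := by
      have h3 : ⟪x, U.symm x⟫_ℂ = (starRingEnd ℂ) ⟪x, U x⟫_ℂ := by
        rw [← U.inner_map_map x (U.symm x), U.apply_symm_apply, ← inner_conj_symm]
      rw [inner_smul_left, inner_smul_right, starRingEnd_self_apply, h3, map_mul, map_mul,
        starRingEnd_self_apply]
      ring
    rw [h1, h2]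
    simp only [norm_smul, RCLike.norm_conj, LinearIsometryEquiv.norm_map, RCLike.conj_re]
  have h := congrArg Real.sqrt hsq
  rwa [Real.sqrt_sq (norm_nonneg _), Real.sqrt_sq (norm_nonneg _)] at h


/-- An invertible operator on a nontrivial Hilbert space is a linear combination of
two unitaries. -/
lemma stmt16_riesz_comb {H : Type*} [NormedAddCommGroup H] [InnerProductSpace ℂ H]
    [CompleteSpace H] (T : H ≃L[ℂ] H) (x₀ : H) (hx₀ : x₀ ≠ 0) :
    ∃ (lam mu : ℂ) (W₁ W₂ : H ≃ₗᵢ[ℂ] H), ∀ x : H, T x = lam • W₁ x + mu • W₂ x := by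
  haveI : Nontrivial H := ⟨⟨x₀, 0, hx₀⟩⟩
  set Tc : H →L[ℂ] H := (T : H →L[ℂ] H) with hTcdef
  set Ti : H →L[ℂ] H := (T.symm : H →L[ℂ] H) with hTidef
  have hTcTi : Tc * Ti = 1 := by
    ext x
    simp [hTcdef, hTidef, ContinuousLinearMap.mul_apply]
  have hTiTc : Ti * Tc = 1 := by
    ext x
    simp [hTcdef, hTidef, ContinuousLinearMap.mul_apply]
  have hTc0 : Tc ≠ 0 := by
    intro h
    apply hx₀
    have h1 : T x₀ = 0 := by rw [show T x₀ = Tc x₀ from rfl, h]; rfl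
    exact T.injective (by rw [h1, map_zero])
  have hc : (0:ℝ) < ‖Tc‖ := norm_pos_iff.mpr hTc0
  set c : ℝ := ‖Tc‖ with hcdef
  set a : H →L[ℂ] H := star Tc * Tc with hadef
  have hsa : IsSelfAdjoint a := IsSelfAdjoint.star_mul_self Tc
  have hTcU : IsUnit Tc := ⟨⟨Tc, Ti, hTcTi, hTiTc⟩, rfl⟩
  have haU : IsUnit a := hTcU.star.mul hTcU
  have hpos : ∀ x ∈ spectrum ℝ a, 0 < x := by
    intro x hx
    have h0 : (0:ℝ) ∉ spectrum ℝ a := (spectrum.zero_notMem_iff ℝ).mpr haU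
    exact (spectrum_star_mul_self_nonneg x hx).lt_of_ne (fun h => h0 (h ▸ hx))
  have hle : ∀ x ∈ spectrum ℝ a, x ≤ c ^ 2 := by
    intro x hx
    have h1 := spectrum.norm_le_norm_of_mem hx
    have h2 : ‖a‖ = c * c := CStarRing.norm_star_mul_self
    rw [Real.norm_eq_abs] at h1
    calc x ≤ |x| := le_abs_self x
    _ ≤ ‖a‖ := h1
    _ = c ^ 2 := by rw [h2]; ring
  have hcid : ContinuousOn (fun x : ℝ => x) (spectrum ℝ a) := continuous_id.continuousOn
  have hcont_sq : ContinuousOn Real.sqrt (spectrum ℝ a) := Real.continuous_sqrt.continuousOn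
  have hcont_isq : ContinuousOn (fun x : ℝ => (Real.sqrt x)⁻¹) (spectrum ℝ a) :=
    ContinuousOn.inv₀ Real.continuous_sqrt.continuousOn
      (fun x hx => Real.sqrt_ne_zero'.mpr (hpos x hx))
  have hcont_rt : ContinuousOn (fun x : ℝ => Real.sqrt (c ^ 2 - x)) (spectrum ℝ a) :=
    (Real.continuous_sqrt.comp (continuous_const.sub continuous_id)).continuousOn
  set p : H →L[ℂ] H := cfc Real.sqrt a with hpdef
  set q : H →L[ℂ] H := cfc (fun x : ℝ => (Real.sqrt x)⁻¹) a with hqdef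
  set s : H →L[ℂ] H := cfc (fun x : ℝ => Real.sqrt (c ^ 2 - x)) a with hsdef
  have hp_sa : IsSelfAdjoint p := cfc_predicate _ _
  have hq_sa : IsSelfAdjoint q := cfc_predicate _ _
  have hs_sa : IsSelfAdjoint s := cfc_predicate _ _
  have hone : cfc (fun _ : ℝ => (1:ℝ)) a = 1 := by rw [cfc_const (1:ℝ) a hsa, map_one]
  have hpt : ∀ x ∈ spectrum ℝ a, (Real.sqrt x)⁻¹ * (Real.sqrt x)⁻¹ * x = 1 := by
    intro x hx
    rw [← mul_inv, Real.mul_self_sqrt (hpos x hx).le]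
    exact inv_mul_cancel₀ (hpos x hx).ne'
  -- q * p = 1 and p * q = 1
  have e4 : cfc (fun x : ℝ => (Real.sqrt x)⁻¹ * Real.sqrt x) a = q * p := by
    rw [cfc_mul _ _ a hcont_isq hcont_sq]
  have hqp : q * p = 1 := by
    rw [← e4, cfc_congr (g := fun _ : ℝ => (1:ℝ))
      (fun x hx => inv_mul_cancel₀ (Real.sqrt_ne_zero'.mpr (hpos x hx))), hone]
  have e5 : cfc (fun x : ℝ => Real.sqrt x * Real.sqrt x) a = p * p := by
    rw [cfc_mul _ _ a hcont_sq hcont_sq]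
  have hpp : p * p = a := by
    rw [← e5, show cfc (fun x : ℝ => Real.sqrt x * Real.sqrt x) a = cfc (fun x : ℝ => x) a from
      cfc_congr (fun x hx => Real.mul_self_sqrt (hpos x hx).le), cfc_id' ℝ a hsa]
  -- q * (a * q) = 1 and (q * q) * a = 1
  have e1 : cfc (fun x : ℝ => x * (Real.sqrt x)⁻¹) a = a * q := by
    rw [cfc_mul (fun x : ℝ => x) _ a hcid hcont_isq, cfc_id' ℝ a hsa]
  have e2 : cfc (fun x : ℝ => (Real.sqrt x)⁻¹ * (x * (Real.sqrt x)⁻¹)) a = q * (a * q) := by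
    rw [cfc_mul (fun x : ℝ => (Real.sqrt x)⁻¹) (fun x : ℝ => x * (Real.sqrt x)⁻¹) a
      hcont_isq (hcid.mul hcont_isq), e1]
  have hqaq : q * (a * q) = 1 := by
    rw [← e2, cfc_congr (g := fun _ : ℝ => (1:ℝ)) (fun x hx => by
      rw [mul_comm x, ← mul_assoc]; exact hpt x hx), hone]
  have e3 : cfc (fun x : ℝ => ((Real.sqrt x)⁻¹ * (Real.sqrt x)⁻¹) * x) a = q * q * a := by
    rw [cfc_mul (fun x : ℝ => (Real.sqrt x)⁻¹ * (Real.sqrt x)⁻¹) (fun x : ℝ => x) a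
      (hcont_isq.mul hcont_isq) hcid, cfc_mul _ _ a hcont_isq hcont_isq, cfc_id' ℝ a hsa]
  have hqqa : q * q * a = 1 := by
    rw [← e3, cfc_congr (g := fun _ : ℝ => (1:ℝ)) (fun x hx => hpt x hx), hone]
  -- p and s commute, and s * s = c² - a
  have e6 : cfc (fun x : ℝ => Real.sqrt x * Real.sqrt (c ^ 2 - x)) a = p * s := by
    rw [cfc_mul _ _ a hcont_sq hcont_rt]
  have e7 : cfc (fun x : ℝ => Real.sqrt (c ^ 2 - x) * Real.sqrt x) a = s * p := by
    rw [cfc_mul _ _ a hcont_rt hcont_sq]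
  have hps : p * s = s * p := by
    rw [← e6, ← e7]
    exact cfc_congr (fun x hx => mul_comm _ _)
  have e8 : cfc (fun x : ℝ => Real.sqrt (c ^ 2 - x) * Real.sqrt (c ^ 2 - x)) a = s * s := by
    rw [cfc_mul _ _ a hcont_rt hcont_rt]
  have hss : s * s = algebraMap ℝ (H →L[ℂ] H) (c ^ 2) - a := by
    rw [← e8, show cfc (fun x : ℝ => Real.sqrt (c ^ 2 - x) * Real.sqrt (c ^ 2 - x)) a
        = cfc (fun x : ℝ => c ^ 2 - x) a from
      cfc_congr (fun x hx => Real.mul_self_sqrt (by linarith [hle x hx])),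
      cfc_sub (fun _ : ℝ => c ^ 2) (fun x : ℝ => x) a (continuous_const.continuousOn) hcid,
      cfc_const _ a hsa, cfc_id' ℝ a hsa]
  -- the two unitary "phases"
  have hkey1 : (p - Complex.I • s) * (p + Complex.I • s) = algebraMap ℝ (H →L[ℂ] H) (c ^ 2) := by
    have hx1 : (p - Complex.I • s) * (p + Complex.I • s)
        = p * p - (Complex.I * Complex.I) • (s * s)
          + (Complex.I • (p * s) - Complex.I • (s * p)) := by
      simp only [mul_add, sub_mul, mul_sub, add_mul, smul_mul_assoc, mul_smul_comm, smul_smul,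
        smul_add, smul_sub]
      abel
    rw [hx1, hps, sub_self, add_zero, Complex.I_mul_I, neg_one_smul, sub_neg_eq_add, hpp, hss]
    abel
  have hkey2 : (p + Complex.I • s) * (p - Complex.I • s) = algebraMap ℝ (H →L[ℂ] H) (c ^ 2) := by
    have hx2 : (p + Complex.I • s) * (p - Complex.I • s)
        = p * p - (Complex.I * Complex.I) • (s * s)
          + (Complex.I • (s * p) - Complex.I • (p * s)) := by
      simp only [mul_add, sub_mul, mul_sub, add_mul, smul_mul_assoc, mul_smul_comm, smul_smul,
        smul_add, smul_sub]
      abel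
    rw [hx2, hps, sub_self, add_zero, Complex.I_mul_I, neg_one_smul, sub_neg_eq_add, hpp, hss]
    abel
  have hcC : ((c:ℂ)) ≠ 0 := Complex.ofReal_ne_zero.mpr hc.ne'
  have hsc : ∀ y : H →L[ℂ] H, ((c:ℂ))⁻¹ • (((c:ℂ))⁻¹ • (algebraMap ℝ (H →L[ℂ] H) (c ^ 2))) = (1 : H →L[ℂ] H) := by
    intro y
    have h1 : algebraMap ℝ (H →L[ℂ] H) (c ^ 2) = ((c:ℂ) ^ 2) • (1 : H →L[ℂ] H) := by
      rw [IsScalarTower.algebraMap_apply ℝ ℂ (H →L[ℂ] H), Algebra.algebraMap_eq_smul_one,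
        Complex.coe_algebraMap, Complex.ofReal_pow]
    rw [h1, smul_smul, smul_smul]
    have hxx : ((c:ℂ))⁻¹ * ((c:ℂ))⁻¹ * ((c:ℂ)) ^ 2 = 1 := by
      field_simp
    rw [hxx, one_smul]
  set w : H →L[ℂ] H := ((c:ℂ))⁻¹ • (p + Complex.I • s) with hwdef
  have hstar_w : star w = ((c:ℂ))⁻¹ • (p - Complex.I • s) := by
    rw [hwdef, star_smul, star_add, star_smul, hp_sa.star_eq, hs_sa.star_eq]
    simp [Complex.conj_ofReal, Complex.conj_I, neg_smul, sub_eq_add_neg]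
  have hw_unitary : w ∈ unitary (H →L[ℂ] H) := by
    rw [Unitary.mem_iff]
    constructor
    · rw [hstar_w, hwdef, smul_mul_assoc, mul_smul_comm, smul_smul, ← smul_smul, hkey1]
      exact hsc 1
    · rw [hstar_w, hwdef, smul_mul_assoc, mul_smul_comm, smul_smul, ← smul_smul, hkey2]
      exact hsc 1
  -- the unitary from the polar decomposition
  have hstarTc : star Tc = a * Ti := by rw [hadef, mul_assoc, hTcTi, mul_one]
  have hU_unitary : Tc * q ∈ unitary (H →L[ℂ] H) := by
    rw [Unitary.mem_iff]
    constructor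
    · rw [star_mul, hq_sa.star_eq]
      have h8 : q * star Tc * (Tc * q) = q * (star Tc * Tc * q) := by noncomm_ring
      rw [h8, ← hadef, mul_assoc]
      exact hqaq
    · rw [star_mul, hq_sa.star_eq, hstarTc]
      have h9 : Tc * q * (q * (a * Ti)) = Tc * ((q * q * a) * Ti) := by noncomm_ring
      rw [h9, hqqa, one_mul]
      exact hTcTi
  have hω₁ : (Tc * q) * w ∈ unitary (H →L[ℂ] H) := mul_mem hU_unitary hw_unitary
  have hω₂ : (Tc * q) * star w ∈ unitary (H →L[ℂ] H) :=
    mul_mem hU_unitary (Unitary.star_mem hw_unitary)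
  have hUp : Tc * q * p = Tc := by rw [mul_assoc, hqp, mul_one]
  have hTc_eq : Tc = ((c:ℂ)/2) • ((Tc * q) * w) + ((c:ℂ)/2) • ((Tc * q) * star w) := by
    rw [hstar_w, hwdef, mul_smul_comm, mul_smul_comm, smul_smul, smul_smul, ← smul_add,
      ← mul_add, add_add_sub_cancel, mul_add, hUp]
    rw [show Tc + Tc = (2:ℂ) • Tc from (two_smul ℂ Tc).symm, smul_smul]
    rw [show (c:ℂ)/2 * ((c:ℂ))⁻¹ * 2 = 1 from by field_simp, one_smul]
  refine ⟨(c:ℂ)/2, (c:ℂ)/2, Unitary.linearIsometryEquiv ⟨_, hω₁⟩,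
    Unitary.linearIsometryEquiv ⟨_, hω₂⟩, fun x => ?_⟩
  have happ := congrArg (fun g : H →L[ℂ] H => g x) hTc_eq
  simp only [ContinuousLinearMap.add_apply, ContinuousLinearMap.smul_apply] at happ
  exact happ

end StmtAux

/-- A frame `{f_j}` of an infinite-dimensional separable Hilbert space `H` (with an orthonormal
basis indexed by `ℕ`) can be written as a fixed linear combination `f_j = λ u_j + μ v_j` of two
orthonormal bases iff `{f_j}` is a Riesz basis (image of an orthonormal basis under a bounded
invertible operator). -/
theorem stmt16 {H : Type*} [NormedAddCommGroup H] [InnerProductSpace ℂ H] [CompleteSpace H]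
    (b₀ : HilbertBasis ℕ ℂ H) (f : ℕ → H) (C D : ℝ) (hC : 0 < C)
    (hframe : ∀ v : H, C * ‖v‖ ^ 2 ≤ ∑' j, ‖⟪v, f j⟫_ℂ‖ ^ 2 ∧
      ∑' j, ‖⟪v, f j⟫_ℂ‖ ^ 2 ≤ D * ‖v‖ ^ 2) :
    (∃ (lam mu : ℂ) (u v : HilbertBasis ℕ ℂ H), ∀ j, f j = lam • u j + mu • v j) ↔
      (∃ (T : H ≃L[ℂ] H) (b : HilbertBasis ℕ ℂ H), ∀ j, f j = T (b j)) := by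
  constructor
  · rintro ⟨lam, mu, u, v, huv⟩
    set U : H ≃ₗᵢ[ℂ] H := u.repr.trans v.repr.symm with hUdef
    have hUu : ∀ j, U (u j) = v j := by
      intro j
      classical
      show v.repr.symm (u.repr (u j)) = v j
      rw [u.repr_self, v.repr_symm_single]
    set N : H →L[ℂ] H :=
      lam • (1 : H →L[ℂ] H) + mu • U.toLinearIsometry.toContinuousLinearMap with hNdef
    set M : H →L[ℂ] H := (starRingEnd ℂ) lam • (1 : H →L[ℂ] H) +
        (starRingEnd ℂ) mu • U.symm.toLinearIsometry.toContinuousLinearMap with hMdef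
    have hNapply : ∀ x, N x = lam • x + mu • U x := by
      intro x
      simp [hNdef, ContinuousLinearMap.add_apply, ContinuousLinearMap.smul_apply,
        ContinuousLinearMap.one_apply]
    have hMapply : ∀ x, M x = (starRingEnd ℂ) lam • x + (starRingEnd ℂ) mu • U.symm x := by
      intro x
      simp [hMdef, ContinuousLinearMap.add_apply, ContinuousLinearMap.smul_apply,
        ContinuousLinearMap.one_apply]
    have hNu : ∀ j, N (u j) = f j := by
      intro j
      rw [hNapply, hUu j, huv j]
    have hadjN : ContinuousLinearMap.adjoint N = M := by
      rw [hNdef, hMdef]; exact stmt16_adjoint_comb U lam mu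
    have hMbound : ∀ x, Real.sqrt C * ‖x‖ ≤ ‖M x‖ := by
      intro x
      have hpar : ∑' j, ‖⟪x, f j⟫_ℂ‖ ^ 2 = ‖M x‖ ^ 2 := by
        have hterm : ∀ j, ‖⟪x, f j⟫_ℂ‖ ^ 2 = ‖⟪u j, M x⟫_ℂ‖ ^ 2 := by
          intro j
          have h5 : ⟪M x, u j⟫_ℂ = ⟪x, N (u j)⟫_ℂ := by
            rw [← hadjN]
            exact ContinuousLinearMap.adjoint_inner_left _ _ _
          rw [← hNu j, ← h5, ← norm_inner_symm]
        rw [tsum_congr hterm, stmt16_parseval u (M x)]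
      have h1 := (hframe x).1
      rw [hpar] at h1
      have h6 := Real.sqrt_le_sqrt h1
      rwa [Real.sqrt_mul hC.le, Real.sqrt_sq (norm_nonneg _),
        Real.sqrt_sq (norm_nonneg _)] at h6
    have hNbound : ∀ x, Real.sqrt C * ‖x‖ ≤ ‖N x‖ := by
      intro x
      have he : ‖N x‖ = ‖M x‖ := by
        rw [hNapply x, hMapply x]; exact stmt16_norm_comb U lam mu x
      rw [he]; exact hMbound x
    obtain ⟨T, hT⟩ := stmt16_equiv_of_bounded_below N (Real.sqrt C)
      (Real.sqrt_pos.mpr hC) hNbound (by rw [hadjN]; exact hMbound)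
    exact ⟨T, u, fun j => by rw [hT (u j), hNu j]⟩
  · rintro ⟨T, b, hfb⟩
    have hb0 : b 0 ≠ 0 := by
      have h1 : ‖b 0‖ = 1 := b.orthonormal.1 0
      intro h
      rw [h, norm_zero] at h1
      norm_num at h1
    obtain ⟨lam, mu, W₁, W₂, hW⟩ := stmt16_riesz_comb T (b 0) hb0
    exact ⟨lam, mu, stmt16HilbertBasisMap b W₁, stmt16HilbertBasisMap b W₂, fun j => by
      rw [stmt16HilbertBasisMap_apply, stmt16HilbertBasisMap_apply, hfb j, hW (b j)]⟩
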